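/- Exponential decay of positive decaying solutions of the soliton equation: Let d ≥ 1 and λ > 0. Let V : ℝ^d → ℝ be continuous with V(x) → 0 as ‖x‖ → ∞, and let f : ℝ → ℝ be continuous with f(0) = 0. Suppose φ : ℝ^d → ℝ is twice continuously differentiable, φ(x) > 0 for all x, φ(x) → 0 as ‖x‖ → ∞, and φ satisfies −Δφ(x) + (λ + V(x)) φ(x) − f(φ(x)²) φ(x) = 0 for all x ∈ ℝ^d. Then there exist constants c > 0 and δ > 0 such that 0 < φ(x) ≤ c e^{−δ‖x‖} for all x ∈ ℝ^d. -/

import Mathlib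

open Filter

/-- The Laplacian: sum of second partial derivatives in the coordinate directions. -/
noncomputable def lap {d : ℕ} {F : Type} [NormedAddCommGroup F] [NormedSpace ℝ F]
    (g : EuclideanSpace ℝ (Fin d) → F) (x : EuclideanSpace ℝ (Fin d)) : F :=
  ∑ k : Fin d, fderiv ℝ (fun y => fderiv ℝ g y (EuclideanSpace.single k 1)) x
    (EuclideanSpace.single k 1)

/-- Second derivative test: at an interior local maximum of a `C²` real function of one
variable, the second derivative is nonpositive. -/
lemma sd_test (g : ℝ → ℝ) (hg : Differentiable ℝ g)
    (hg' : DifferentiableAt ℝ (deriv g) 0) (hmax : IsLocalMax g 0) :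
    deriv (deriv g) 0 ≤ 0 := by
  by_contra h
  push_neg at h
  have h0 : deriv g 0 = 0 := hmax.deriv_eq_zero
  have hda : HasDerivAt (deriv g) (deriv (deriv g) 0) 0 := hg'.hasDerivAt
  rw [hasDerivAt_iff_tendsto_slope] at hda
  have hev : ∀ᶠ t in nhdsWithin 0 {0}ᶜ, 0 < slope (deriv g) 0 t :=
    hda.eventually (eventually_gt_nhds h)
  have hev2 : ∀ᶠ t in nhdsWithin (0:ℝ) (Set.Ioi 0), 0 < slope (deriv g) 0 t :=
    nhdsWithin_mono 0 (fun t (ht : t ∈ Set.Ioi 0) => ne_of_gt ht) hev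
  rw [eventually_nhdsWithin_iff] at hev2
  rw [Metric.eventually_nhds_iff] at hev2
  obtain ⟨ε, hε, hball⟩ := hev2
  have hpos : ∀ t ∈ Set.Ioo (0:ℝ) ε, 0 < deriv g t := by
    intro t ht
    have hd : dist t 0 < ε := by
      rw [Real.dist_eq, sub_zero, abs_of_pos ht.1]; exact ht.2
    have := hball hd ht.1
    rw [slope_def_field, h0, sub_zero, div_pos_iff] at this
    rcases this with ⟨h1, h2⟩ | ⟨h1, h2⟩
    · exact h1
    · linarith [ht.1]
  obtain ⟨ε₂, hε₂, hballmax⟩ := Metric.eventually_nhds_iff.mp hmax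
  set t₁ := min (ε/2) (ε₂/2) with ht₁def
  have ht₁pos : 0 < t₁ := lt_min (by linarith) (by linarith)
  have hmono : StrictMonoOn g (Set.Icc 0 t₁) := by
    apply strictMonoOn_of_deriv_pos (convex_Icc 0 t₁) (hg.continuous.continuousOn)
    intro x hx
    rw [interior_Icc] at hx
    exact hpos x ⟨hx.1, lt_of_lt_of_le (hx.2.trans_le (min_le_left _ _)) (by linarith)⟩
  have hlt : g 0 < g t₁ :=
    hmono (Set.left_mem_Icc.2 ht₁pos.le) (Set.right_mem_Icc.2 ht₁pos.le) ht₁pos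
  have : g t₁ ≤ g 0 := by
    apply hballmax
    rw [Real.dist_eq, sub_zero, abs_of_pos ht₁pos]
    exact lt_of_le_of_lt (min_le_right _ _) (by linarith)
  linarith

/-- The Laplacian is nonpositive at a local maximum. -/
lemma lap_nonpos_at_localMax {d : ℕ} (w : EuclideanSpace ℝ (Fin d) → ℝ)
    (x₀ : EuclideanSpace ℝ (Fin d)) (hw : Differentiable ℝ w)
    (hw2 : ∀ e : EuclideanSpace ℝ (Fin d), DifferentiableAt ℝ (fun y => fderiv ℝ w y e) x₀)
    (hmax : IsLocalMax w x₀) : lap w x₀ ≤ 0 := by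
  apply Finset.sum_nonpos
  intro k _
  set e := EuclideanSpace.single k (1:ℝ) with he
  set g : ℝ → ℝ := fun t => w (x₀ + t • e) with hgdef
  have hline : ∀ t : ℝ, HasDerivAt (fun s : ℝ => x₀ + s • e) e t := by
    intro t
    simpa using ((hasDerivAt_id t).smul_const e).const_add x₀
  have hg : ∀ t, HasDerivAt g (fderiv ℝ w (x₀ + t • e) e) t := fun t =>
    (hw (x₀ + t • e)).hasFDerivAt.comp_hasDerivAt t (hline t)
  have hderivg : deriv g = fun t => fderiv ℝ w (x₀ + t • e) e :=
    funext fun t => (hg t).deriv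
  have hg2 : HasDerivAt (deriv g) (fderiv ℝ (fun y => fderiv ℝ w y e) x₀ e) 0 := by
    rw [hderivg]
    have h0 : x₀ + (0:ℝ) • e = x₀ := by simp
    have hd : HasFDerivAt (fun y => fderiv ℝ w y e)
        (fderiv ℝ (fun y => fderiv ℝ w y e) x₀) (x₀ + (0:ℝ) • e) := by
      rw [h0]; exact (hw2 e).hasFDerivAt
    have := hd.comp_hasDerivAt 0 (hline 0)
    exact this
  have hgmax : IsLocalMax g 0 := by
    have hc : Tendsto (fun t : ℝ => x₀ + t • e) (nhds 0) (nhds x₀) := by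
      have : Continuous (fun t : ℝ => x₀ + t • e) := by continuity
      simpa using this.tendsto 0
    have := hc.eventually hmax
    simpa [IsLocalMax, IsMaxFilter, hgdef] using this
  have := sd_test g (fun t => (hg t).differentiableAt) hg2.differentiableAt hgmax
  rwa [hg2.deriv] at this

lemma hasFDerivAt_exp_lin {E : Type} [NormedAddCommGroup E] [NormedSpace ℝ E]
    (c δ : ℝ) (L : E →L[ℝ] ℝ) (y : E) :
    HasFDerivAt (fun x => c * Real.exp (δ * L x)) ((c * Real.exp (δ * L y) * δ) • L) y := by
  have h1 : HasFDerivAt (fun x => δ * L x) (δ • L) y := by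
    convert (δ • L).hasFDerivAt using 1; ext x; simp
  have h2 := (Real.hasDerivAt_exp (δ * L y)).comp_hasFDerivAt y h1
  have h3 := h2.const_mul c
  refine h3.congr_fderiv ?_
  ext z
  simp [mul_comm, mul_assoc, mul_left_comm]

section psi

variable {d : ℕ}

lemma psi_hasFDerivAt (c δ : ℝ) (v y : EuclideanSpace ℝ (Fin d)) :
    HasFDerivAt (fun x : EuclideanSpace ℝ (Fin d) => c * Real.exp (δ * (inner ℝ v x : ℝ)))
      ((c * Real.exp (δ * (inner ℝ v y : ℝ)) * δ) • innerSL ℝ v) y := by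
  simpa [innerSL_apply_apply] using hasFDerivAt_exp_lin c δ (innerSL ℝ v) y

lemma psi_fderiv_apply (c δ : ℝ) (v y e : EuclideanSpace ℝ (Fin d)) :
    fderiv ℝ (fun x : EuclideanSpace ℝ (Fin d) => c * Real.exp (δ * (inner ℝ v x : ℝ))) y e
      = (c * Real.exp (δ * (inner ℝ v y : ℝ)) * δ) * (inner ℝ v e : ℝ) := by
  rw [(psi_hasFDerivAt c δ v y).fderiv]
  simp [innerSL_apply_apply]

lemma psi_fderiv_fun (c δ : ℝ) (v e : EuclideanSpace ℝ (Fin d)) :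
    (fun y : EuclideanSpace ℝ (Fin d) =>
        fderiv ℝ (fun x : EuclideanSpace ℝ (Fin d) => c * Real.exp (δ * (inner ℝ v x : ℝ))) y e)
      = fun y : EuclideanSpace ℝ (Fin d) =>
        (c * δ * (inner ℝ v e : ℝ)) * Real.exp (δ * (inner ℝ v y : ℝ)) := by
  funext y
  rw [psi_fderiv_apply]
  ring

lemma psi_fderiv2_apply (c δ : ℝ) (v x e : EuclideanSpace ℝ (Fin d)) :
    fderiv ℝ (fun y : EuclideanSpace ℝ (Fin d) =>
        fderiv ℝ (fun z : EuclideanSpace ℝ (Fin d) => c * Real.exp (δ * (inner ℝ v z : ℝ))) y e) x e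
      = c * Real.exp (δ * (inner ℝ v x : ℝ)) * δ^2 * (inner ℝ v e : ℝ)^2 := by
  rw [psi_fderiv_fun, psi_fderiv_apply]
  ring

lemma psi_diffAt_fderiv (c δ : ℝ) (v x e : EuclideanSpace ℝ (Fin d)) :
    DifferentiableAt ℝ
      (fun y : EuclideanSpace ℝ (Fin d) =>
        fderiv ℝ (fun z : EuclideanSpace ℝ (Fin d) => c * Real.exp (δ * (inner ℝ v z : ℝ))) y e)
      x := by
  rw [psi_fderiv_fun]
  exact (psi_hasFDerivAt (c * δ * (inner ℝ v e : ℝ)) δ v x).differentiableAt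

lemma lap_psi (c δ : ℝ) (v x : EuclideanSpace ℝ (Fin d)) (hv : ‖v‖ = 1) :
    lap (fun y : EuclideanSpace ℝ (Fin d) => c * Real.exp (δ * (inner ℝ v y : ℝ))) x
      = c * Real.exp (δ * (inner ℝ v x : ℝ)) * δ^2 := by
  unfold lap
  have hsum : ∀ k : Fin d,
      fderiv ℝ (fun y : EuclideanSpace ℝ (Fin d) =>
          fderiv ℝ (fun z : EuclideanSpace ℝ (Fin d) => c * Real.exp (δ * (inner ℝ v z : ℝ))) y
        (EuclideanSpace.single k 1)) x (EuclideanSpace.single k 1)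
      = c * Real.exp (δ * (inner ℝ v x : ℝ)) * δ^2
          * (inner ℝ v (EuclideanSpace.single k (1:ℝ)) : ℝ)^2 :=
    fun k => psi_fderiv2_apply c δ v x _
  rw [Finset.sum_congr rfl (fun k _ => hsum k), ← Finset.mul_sum]
  have : ∑ k : Fin d, (inner ℝ v (EuclideanSpace.single k (1:ℝ)) : ℝ)^2 = ‖v‖^2 := by
    rw [← real_inner_self_eq_norm_sq, PiLp.inner_apply]
    congr 1
    ext k
    simp [PiLp.inner_apply, EuclideanSpace.single_apply, RCLike.inner_apply, pow_two]
  rw [this, hv]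
  ring

end psi

set_option maxHeartbeats 2000000 in
/-- Exponential decay of positive decaying solutions of the soliton equation
`-Δφ + (λ+V)φ - f(φ²)φ = 0` with `λ > 0`, `V → 0` at infinity and `f(0) = 0`:
there are `c, δ > 0` with `0 < φ(x) ≤ c e^{-δ‖x‖}`. -/
theorem soliton_exponential_decay (d : ℕ) (hd : 1 ≤ d) (lam : ℝ) (hlam : 0 < lam)
    (V : EuclideanSpace ℝ (Fin d) → ℝ) (hV : Continuous V)
    (hVdecay : Tendsto V (cocompact (EuclideanSpace ℝ (Fin d))) (nhds 0))
    (f : ℝ → ℝ) (hf : Continuous f) (hf0 : f 0 = 0)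
    (φ : EuclideanSpace ℝ (Fin d) → ℝ) (hφ : ContDiff ℝ 2 φ)
    (hφpos : ∀ x, 0 < φ x)
    (hφdecay : Tendsto φ (cocompact (EuclideanSpace ℝ (Fin d))) (nhds 0))
    (heq : ∀ x : EuclideanSpace ℝ (Fin d),
      -lap φ x + (lam + V x) * φ x - f (φ x ^ 2) * φ x = 0) :
    ∃ c : ℝ, 0 < c ∧ ∃ δ : ℝ, 0 < δ ∧
      ∀ x : EuclideanSpace ℝ (Fin d), φ x ≤ c * Real.exp (-δ * ‖x‖) := by
  -- basic differentiability facts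
  have hφdiff : Differentiable ℝ φ := hφ.differentiable (by norm_num)
  have hφcont : Continuous φ := hφdiff.continuous
  have hφC1 : ContDiff ℝ 1 (fderiv ℝ φ) := hφ.fderiv_right (by norm_num)
  have hφfd : ∀ e : EuclideanSpace ℝ (Fin d), Differentiable ℝ (fun y => fderiv ℝ φ y e) := by
    intro e
    exact (ContinuousLinearMap.apply ℝ ℝ e).differentiable.comp (hφC1.differentiable (by norm_num))
  -- PDE rearranged
  have lapφ_eq : ∀ x, lap φ x = (lam + V x - f (φ x ^ 2)) * φ x := by
    intro x
    linear_combination (-1 : ℝ) * heq x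
  -- global bound on φ
  obtain ⟨xm, hxm⟩ := hφcont.exists_forall_ge' 0
    ((hφdecay.eventually_lt_const (hφpos 0)).mono fun x hx => hx.le)
  set M := φ xm with hM
  have hMpos : 0 < M := hφpos xm
  -- radius beyond which V and f(φ²) are small
  have hVev : ∀ᶠ x in cocompact (EuclideanSpace ℝ (Fin d)), |V x| < lam/4 := by
    have hb : ∀ᶠ z in nhds (0:ℝ), |z| < lam/4 := by
      simpa using eventually_abs_sub_lt (0:ℝ) (by linarith : (0:ℝ) < lam/4)
    exact hVdecay.eventually hb
  have hfev : ∀ᶠ x in cocompact (EuclideanSpace ℝ (Fin d)), |f (φ x ^ 2)| < lam/4 := by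
    have h1 : Tendsto (fun x => φ x ^ 2) (cocompact (EuclideanSpace ℝ (Fin d))) (nhds 0) := by
      simpa using hφdecay.pow 2
    have h2 : Tendsto (fun x => f (φ x ^ 2)) (cocompact (EuclideanSpace ℝ (Fin d))) (nhds 0) := by
      have := (hf.tendsto 0).comp h1
      simpa [hf0, Function.comp_def] using this
    have hb : ∀ᶠ z in nhds (0:ℝ), |z| < lam/4 := by
      simpa using eventually_abs_sub_lt (0:ℝ) (by linarith : (0:ℝ) < lam/4)
    exact h2.eventually hb
  obtain ⟨K, hK, hKsub⟩ := Filter.mem_cocompact.mp (hVev.and hfev)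
  obtain ⟨R₀, hR₀⟩ := hK.isBounded.subset_closedBall 0
  set R : ℝ := max R₀ 0 + 1 with hRdef
  have hRpos : 0 < R := by positivity
  have hRsmall : ∀ x : EuclideanSpace ℝ (Fin d), R ≤ ‖x‖ → |V x| < lam/4 ∧ |f (φ x ^ 2)| < lam/4 := by
    intro x hx
    apply hKsub
    intro hxK
    have := hR₀ hxK
    rw [Metric.mem_closedBall, dist_zero_right] at this
    have : R₀ ≥ ‖x‖ := this
    have h1 : R₀ ≤ max R₀ 0 := le_max_left _ _
    linarith
  -- the decay rate
  set δ : ℝ := Real.sqrt (lam/2) with hδdef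
  have hδpos : 0 < δ := Real.sqrt_pos.2 (by linarith)
  have hδ2 : δ^2 = lam/2 := Real.sq_sqrt (by linarith)
  set c₀ : ℝ := M * Real.exp (δ * R) with hc₀def
  have hc₀pos : 0 < c₀ := by positivity
  -- the key comparison estimate, for every unit direction v
  have key : ∀ v : EuclideanSpace ℝ (Fin d), ‖v‖ = 1 → ∀ x : EuclideanSpace ℝ (Fin d), R ≤ ‖x‖ →
      φ x ≤ c₀ * Real.exp (-δ * (inner ℝ v x : ℝ)) := by
    intro v hv
    by_contra hcon
    push_neg at hcon
    obtain ⟨a, haR, ha⟩ := hcon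
    set ψ : EuclideanSpace ℝ (Fin d) → ℝ := fun y => c₀ * Real.exp (-δ * (inner ℝ v y : ℝ)) with hψdef
    have hψdiff : Differentiable ℝ ψ := fun y => (psi_hasFDerivAt c₀ (-δ) v y).differentiableAt
    have hψeq : ∀ y, ψ y = c₀ * Real.exp (-δ * (inner ℝ v y : ℝ)) := fun _ => rfl
    have hψpos : ∀ y, 0 < ψ y := fun y => by rw [hψeq]; positivity
    set w : EuclideanSpace ℝ (Fin d) → ℝ := fun y => φ y - ψ y with hwdef
    have hwdiff : Differentiable ℝ w := hφdiff.sub hψdiff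
    have hweq : ∀ y, w y = φ y - ψ y := fun _ => rfl
    have hwa : 0 < w a := by rw [hweq, hψeq]; linarith [ha]
    obtain ⟨t, htpos, htle⟩ : ∃ t : ℝ, 0 < t ∧ t ≤ w a := ⟨w a, hwa, le_rfl⟩
    -- boundary estimate : w ≤ 0 on ‖y‖ ≤ R
    have hbdry : ∀ y : EuclideanSpace ℝ (Fin d), ‖y‖ ≤ R → w y ≤ 0 := by
      intro y hy
      have hiy : (inner ℝ v y : ℝ) ≤ R := by
        calc (inner ℝ v y : ℝ) ≤ ‖v‖ * ‖y‖ := real_inner_le_norm v y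
        _ = ‖y‖ := by rw [hv, one_mul]
        _ ≤ R := hy
      have h1 : M ≤ ψ y := by
        have : ψ y = M * Real.exp (δ * R - δ * (inner ℝ v y : ℝ)) := by
          rw [hψeq, hc₀def, mul_assoc, ← Real.exp_add]; ring_nf
        rw [this]
        nlinarith [Real.one_le_exp (by nlinarith : (0:ℝ) ≤ δ * R - δ * (inner ℝ v y : ℝ)),
          hMpos]
      have h2 : φ y ≤ M := hxm y
      rw [hweq]; linarith
    -- far away, w is small
    have hφsmall : ∀ᶠ x in cocompact (EuclideanSpace ℝ (Fin d)), φ x < t/2 :=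
      Tendsto.eventually_lt_const (show (0:ℝ) < t/2 by linarith) hφdecay
    obtain ⟨K₂, hK₂, hK₂sub⟩ := Filter.mem_cocompact.mp hφsmall
    obtain ⟨R₁, hR₁⟩ := hK₂.isBounded.subset_closedBall 0
    set R₂ : ℝ := max R₁ ‖a‖ with hR₂def
    have hfar : ∀ y : EuclideanSpace ℝ (Fin d), R₂ < ‖y‖ → φ y < t/2 := by
      intro y hy
      apply hK₂sub
      intro hyK
      have := hR₁ hyK
      rw [Metric.mem_closedBall, dist_zero_right] at this
      have h1 : R₁ ≤ max R₁ ‖a‖ := le_max_left _ _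
      linarith
    -- maximize w on the compact annulus
    set C : Set (EuclideanSpace ℝ (Fin d)) := Metric.closedBall 0 R₂ ∩ {y : EuclideanSpace ℝ (Fin d) | R ≤ ‖y‖} with hCdef
    have hCc : IsCompact C :=
      (isCompact_closedBall 0 R₂).inter_right (isClosed_le continuous_const continuous_norm)
    have haC : a ∈ C := by
      constructor
      · rw [Metric.mem_closedBall, dist_zero_right]; exact le_max_right _ _
      · exact haR
    have hwcont : Continuous w := hwdiff.continuous
    obtain ⟨x₀, hx₀C, hx₀max⟩ := hCc.exists_isMaxOn ⟨a, haC⟩ hwcont.continuousOn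
    have hx₀max' : ∀ y ∈ C, w y ≤ w x₀ := isMaxOn_iff.mp hx₀max
    have hwx₀ : t ≤ w x₀ := le_trans htle (hx₀max' a haC)
    have hAll : ∀ y : EuclideanSpace ℝ (Fin d), R ≤ ‖y‖ → w y ≤ w x₀ := by
      intro y hy
      by_cases hy2 : ‖y‖ ≤ R₂
      · exact hx₀max' y ⟨by rwa [Metric.mem_closedBall, dist_zero_right], hy⟩
      · push_neg at hy2
        have h1 : φ y < t/2 := hfar y hy2
        have h2 : w y ≤ φ y := by rw [hweq]; linarith [hψpos y]
        linarith
    have hx₀R : R < ‖x₀‖ := by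
      have hmem : R ≤ ‖x₀‖ := hx₀C.2
      rcases lt_or_eq_of_le hmem with h | h
      · exact h
      · exfalso
        have := hbdry x₀ h.symm.le
        linarith
    have hlocmax : IsLocalMax w x₀ := by
      rw [IsLocalMax, IsMaxFilter, Metric.eventually_nhds_iff]
      refine ⟨‖x₀‖ - R, by linarith, fun y hy => ?_⟩
      apply hAll
      have h1 : ‖x₀‖ - ‖y‖ ≤ ‖x₀ - y‖ := by
        have := norm_sub_norm_le x₀ y
        linarith [this]
      have h2 : ‖x₀ - y‖ = dist y x₀ := by rw [dist_comm, dist_eq_norm]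
      rw [h2] at h1
      linarith
    -- the Laplacian comparison
    have hfw : ∀ e : EuclideanSpace ℝ (Fin d), (fun y => fderiv ℝ w y e)
        = fun y => fderiv ℝ φ y e - fderiv ℝ ψ y e := by
      intro e
      funext y
      have h1 : fderiv ℝ w y = fderiv ℝ φ y - fderiv ℝ ψ y := by
        have h2 : w = fun z => φ z - ψ z := funext hweq
        rw [h2, fderiv_fun_sub (hφdiff y) (hψdiff y)]
      rw [h1]
      simp
    have hψfd : ∀ (e x : EuclideanSpace ℝ (Fin d)),
        DifferentiableAt ℝ (fun y => fderiv ℝ ψ y e) x := by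
      intro e x
      rw [hψdef]
      exact psi_diffAt_fderiv c₀ (-δ) v x e
    have hw2 : ∀ e : EuclideanSpace ℝ (Fin d), DifferentiableAt ℝ (fun y => fderiv ℝ w y e) x₀ := by
      intro e
      rw [hfw e]
      exact (hφfd e x₀).sub (hψfd e x₀)
    have hlapw : lap w x₀ = lap φ x₀ - lap ψ x₀ := by
      unfold lap
      rw [← Finset.sum_sub_distrib]
      apply Finset.sum_congr rfl
      intro k _
      rw [hfw (EuclideanSpace.single k 1)]
      rw [fderiv_fun_sub (hφfd (EuclideanSpace.single k 1) x₀)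
        (hψfd (EuclideanSpace.single k 1) x₀)]
      simp
    have hlapψ : lap ψ x₀ = ψ x₀ * δ^2 := by
      rw [hψdef, lap_psi c₀ (-δ) v x₀ hv]
      show c₀ * Real.exp (-δ * (inner ℝ v x₀ : ℝ)) * (-δ)^2
        = c₀ * Real.exp (-δ * (inner ℝ v x₀ : ℝ)) * δ^2
      ring
    have hlapφ : (lam/2) * φ x₀ ≤ lap φ x₀ := by
      rw [lapφ_eq x₀]
      obtain ⟨h1, h2⟩ := hRsmall x₀ hx₀R.le
      have h3 : -(lam/4) < V x₀ := neg_lt_of_abs_lt h1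
      have h4 : f (φ x₀ ^ 2) < lam/4 := lt_of_abs_lt h2
      nlinarith [hφpos x₀]
    have hlapw_pos : 0 < lap w x₀ := by
      rw [hlapw]
      have hψx₀ : lap ψ x₀ = (lam/2) * ψ x₀ := by rw [hlapψ, hδ2]; ring
      rw [hψx₀]
      have hwx₀' : 0 < φ x₀ - ψ x₀ := by
        have h5 : w x₀ = φ x₀ - ψ x₀ := hweq x₀
        linarith [hwx₀, htpos]
      nlinarith
    have := lap_nonpos_at_localMax w x₀ hwdiff hw2 hlocmax
    linarith
  -- conclude
  refine ⟨c₀, hc₀pos, δ, hδpos, fun x => ?_⟩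
  by_cases hx : R ≤ ‖x‖
  · have hxpos : 0 < ‖x‖ := lt_of_lt_of_le hRpos hx
    have hxne : x ≠ 0 := by
      intro h
      rw [h, norm_zero] at hxpos
      exact lt_irrefl 0 hxpos
    set v : EuclideanSpace ℝ (Fin d) := ‖x‖⁻¹ • x with hvdef
    have hv : ‖v‖ = 1 := by
      rw [hvdef, norm_smul, norm_inv, norm_norm]
      field_simp
    have hiv : (inner ℝ v x : ℝ) = ‖x‖ := by
      rw [hvdef, real_inner_smul_left, real_inner_self_eq_norm_sq]
      field_simp
    have := key v hv x hx
    rwa [hiv] at this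
  · push_neg at hx
    have h1 : φ x ≤ M := hxm x
    have h2 : M ≤ c₀ * Real.exp (-δ * ‖x‖) := by
      have : c₀ * Real.exp (-δ * ‖x‖) = M * Real.exp (δ * R - δ * ‖x‖) := by
        rw [hc₀def, mul_assoc, ← Real.exp_add]; ring_nf
      rw [this]
      nlinarith [Real.one_le_exp (by nlinarith [norm_nonneg x, hδpos.le, hx.le]
        : (0:ℝ) ≤ δ * R - δ * ‖x‖), hMpos]
    linarith
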